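/- For every real u > 0, u/(1 - e^{-u}) ≤ ∑_{k=0}^∞ u^k/(k!(k+1)!), and therefore for every integer k ≥ 0 and t > 0, ∫_0^∞ [∑_{j=0}^∞ u^j/(j!(j+1)!) - u/(1 - e^{-u})] u^k e^{-tu} du ≥ 0. -/
import Mathlib

open Real Finset

lemma pade_aux (u : ℝ) (hu : 0 ≤ u) :
    12 + 6*u + u^2 ≤ (12 - 6*u + u^2) * Real.exp u := by
  have h := Real.sum_le_exp_of_nonneg hu 7
  have hsum : ∑ i ∈ Finset.range 7, u ^ i / i.factorial
      = 1 + u + u^2/2 + u^3/6 + u^4/24 + u^5/120 + u^6/720 := by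
    simp [Finset.sum_range_succ, Nat.factorial]
  rw [hsum] at h
  have hpos : 0 < 12 - 6*u + u^2 := by nlinarith [sq_nonneg (u - 3)]
  nlinarith [mul_le_mul_of_nonneg_left h (le_of_lt hpos), sq_nonneg u,
    pow_nonneg hu 5, pow_nonneg hu 6, pow_nonneg hu 8]

lemma key (u : ℝ) (hu : 0 < u) :
    u / (1 - Real.exp (-u)) ≤ 1 + u/2 + u^2/12 := by
  have he : Real.exp (-u) < 1 := by
    rw [Real.exp_lt_one_iff]; linarith
  have hd : 0 < 1 - Real.exp (-u) := by linarith
  rw [div_le_iff₀ hd]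
  have h := pade_aux u hu.le
  have hE : Real.exp (-u) = 1 / Real.exp u := by
    rw [Real.exp_neg]; ring
  have hEpos : 0 < Real.exp u := Real.exp_pos u
  -- (12+6u+u²) e^{-u} ≤ 12-6u+u²
  have h2 : (12 + 6*u + u^2) * Real.exp (-u) ≤ 12 - 6*u + u^2 := by
    rw [hE, mul_one_div, div_le_iff₀ hEpos]
    linarith
  nlinarith

lemma summable_series (u : ℝ) :
    Summable (fun k : ℕ => u ^ k / ((k.factorial : ℝ) * ((k + 1).factorial : ℝ))) := by
  apply Summable.of_norm
  apply Summable.of_nonneg_of_le (fun k => norm_nonneg _)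
    (fun k => ?_) (Real.summable_pow_div_factorial |u|)
  have h1 : (1:ℝ) ≤ ((k+1).factorial : ℝ) := by
    exact_mod_cast Nat.one_le_iff_ne_zero.mpr (Nat.factorial_ne_zero _)
  have h0 : (0:ℝ) < (k.factorial : ℝ) := by positivity
  have hpos : (0:ℝ) < (k.factorial : ℝ) * ((k+1).factorial : ℝ) := by positivity
  rw [Real.norm_eq_abs, abs_div, abs_pow, abs_of_pos hpos]
  gcongr
  exact le_mul_of_one_le_right h0.le h1

lemma part1 (u : ℝ) (hu : 0 < u) :
    u / (1 - Real.exp (-u))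
      ≤ ∑' k : ℕ, u ^ k / ((k.factorial : ℝ) * ((k + 1).factorial : ℝ)) := by
  refine (key u hu).trans ?_
  have hs := summable_series u
  have hle := Summable.sum_le_tsum (Finset.range 3)
    (fun k _ => by positivity) hs
  refine le_trans ?_ hle
  simp [Finset.sum_range_succ, Nat.factorial]
  nlinarith [sq_nonneg u]

theorem stmt_16 :
    (∀ u : ℝ, 0 < u →
      u / (1 - Real.exp (-u))
        ≤ ∑' k : ℕ, u ^ k / ((k.factorial : ℝ) * ((k + 1).factorial : ℝ)))
    ∧ ∀ (k : ℕ) (t : ℝ), 0 < t →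
        0 ≤ ∫ u in Set.Ioi (0 : ℝ),
          ((∑' j : ℕ, u ^ j / ((j.factorial : ℝ) * ((j + 1).factorial : ℝ)))
            - u / (1 - Real.exp (-u))) * u ^ k * Real.exp (-t * u) := by
  refine ⟨part1, fun k t ht => ?_⟩
  apply MeasureTheory.setIntegral_nonneg measurableSet_Ioi
  intro u hu
  have h1 := part1 u hu
  have : (0:ℝ) ≤ u := (le_of_lt hu)
  exact mul_nonneg (mul_nonneg (sub_nonneg.mpr h1) (pow_nonneg this k))
    (Real.exp_pos _).le
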